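/- (Sufficiency direction of the invariance criterion for cyclic-HZMM.) Let E be a countable set, let T : E × E × E → [0,1] satisfy ∑_{u∈E} T(s,t;u) = 1 for all s, t ∈ E, and let M⁻, M⁺ : E × E → [0,1] be Markov kernels (each row sums to 1). Assume (i) commutation: for all s, t ∈ E, ∑_{w} M⁻(s;w)·M⁺(w;t) = ∑_{w} M⁺(s;w)·M⁻(w;t), and (ii) for all s, t, u ∈ E, (∑_{w} M⁻(s;w)·M⁺(w;t)) · T(s,t;u) = M⁻(s;u)·M⁺(u;t). Then for every L ≥ 1 and all t, u : ℤ/Lℤ → E: ∑_{s : ℤ/Lℤ → E} (∏_{i∈ℤ/Lℤ} M⁻(s_i;t_i)·M⁺(t_i;s_{i+1})) · (∏_{i∈ℤ/Lℤ} T(t_i,t_{i+1};u_i)) = ∏_{i∈ℤ/Lℤ} M⁻(t_i;u_i)·M⁺(u_i;t_{i+1}); that is, the cyclic horizontal zigzag Markovian measure θ_{(M⁻,M⁺)}((s;t)) = ∏_i M⁻(s_i;t_i)·M⁺(t_i;s_{i+1}) is invariant under the probabilistic cellular automaton with transition T. -/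

import Mathlib

open scoped BigOperators

set_option maxHeartbeats 1000000

private def stmt5FinSuccEquiv (E : Type*) (n : ℕ) : (Fin (n + 1) → E) ≃ E × (Fin n → E) where
  toFun f := (f 0, fun i => f i.succ)
  invFun p := Fin.cons p.1 p.2
  left_inv f := by
    funext i
    refine Fin.cases ?_ ?_ i <;> simp
  right_inv p := by simp

private lemma hasSum_pi_fin {E : Type*} :
    ∀ (n : ℕ) (h : Fin n → E → ℝ) (a : Fin n → ℝ),
      (∀ i x, 0 ≤ h i x) → (∀ i, HasSum (h i) (a i)) →
      HasSum (fun f : Fin n → E => ∏ i, h i (f i)) (∏ i, a i) := by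
  intro n
  induction n with
  | zero =>
    intro h a _ _
    simpa using hasSum_unique (fun _ : Fin 0 → E => (1 : ℝ))
  | succ n ih =>
    intro h a hnn hh
    set G : (Fin n → E) → ℝ := fun f => ∏ i, h i.succ (f i) with hG
    have ihn : HasSum G (∏ i : Fin n, a i.succ) :=
      ih (fun i => h i.succ) (fun i => a i.succ) (fun i x => hnn i.succ x) (fun i => hh i.succ)
    have hnnP : ∀ f : Fin n → E, 0 ≤ G f := fun f =>
      Finset.prod_nonneg fun i _ => hnn i.succ (f i)
    have hs : Summable (fun p : E × (Fin n → E) => h 0 p.1 * G p.2) :=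
      (hh 0).summable.mul_of_nonneg ihn.summable (fun x => hnn 0 x) hnnP
    have hmul : HasSum (fun p : E × (Fin n → E) => h 0 p.1 * G p.2)
        (a 0 * ∏ i : Fin n, a i.succ) := (hh 0).mul ihn hs
    have key : HasSum ((fun p : E × (Fin n → E) => h 0 p.1 * G p.2)
        ∘ (stmt5FinSuccEquiv E n)) (a 0 * ∏ i : Fin n, a i.succ) :=
      ((stmt5FinSuccEquiv E n).hasSum_iff).2 hmul
    have heq : (fun f : Fin (n + 1) → E => ∏ i, h i (f i))
        = (fun p : E × (Fin n → E) => h 0 p.1 * G p.2)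
          ∘ (stmt5FinSuccEquiv E n) := by
      funext f
      simp [hG, stmt5FinSuccEquiv, Fin.prod_univ_succ]
    rw [heq, Fin.prod_univ_succ]
    exact key

private def stmt5PiReindex {ι κ E : Type*} (e : ι ≃ κ) : (κ → E) ≃ (ι → E) where
  toFun f := fun i => f (e i)
  invFun s := fun k => s (e.symm k)
  left_inv f := by funext k; simp
  right_inv s := by funext i; simp

private lemma hasSum_pi_prod {ι E : Type*} [Fintype ι] (h : ι → E → ℝ) (a : ι → ℝ)
    (hnn : ∀ i x, 0 ≤ h i x) (hh : ∀ i, HasSum (h i) (a i)) :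
    HasSum (fun f : ι → E => ∏ i, h i (f i)) (∏ i, a i) := by
  classical
  set e := Fintype.equivFin ι with he
  have base := hasSum_pi_fin (Fintype.card ι) (fun k => h (e.symm k)) (fun k => a (e.symm k))
    (fun k x => hnn _ x) (fun k => hh _)
  have key : HasSum ((fun s : ι → E => ∏ i, h i (s i)) ∘ (stmt5PiReindex e))
      (∏ k, a (e.symm k)) := by
    have heq : ((fun s : ι → E => ∏ i, h i (s i)) ∘ (stmt5PiReindex e))
        = fun f : Fin (Fintype.card ι) → E => ∏ k, h (e.symm k) (f k) := by
      funext f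
      exact Fintype.prod_equiv e (fun i => h i (f (e i)))
        (fun k => h (e.symm k) (f k)) (fun i => by simp)
    rw [heq]; exact base
  have := ((stmt5PiReindex e).hasSum_iff).1 key
  rwa [Equiv.prod_comp e.symm a] at this

private def stmt5ShiftEquiv (E : Type*) (L : ℕ) : (ZMod L → E) ≃ (ZMod L → E) where
  toFun s := fun i => s (i + 1)
  invFun s := fun i => s (i - 1)
  left_inv s := by funext i; simp
  right_inv s := by funext i; simp

theorem stmt_5 {E : Type*} [Countable E]
    (T : E → E → E → ℝ) (hT01 : ∀ s t u, T s t u ∈ Set.Icc (0 : ℝ) 1)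
    (hTsum : ∀ s t, HasSum (T s t) 1)
    (Mm Mp : E → E → ℝ)
    (hMm01 : ∀ s u, Mm s u ∈ Set.Icc (0 : ℝ) 1)
    (hMp01 : ∀ s u, Mp s u ∈ Set.Icc (0 : ℝ) 1)
    (hMmsum : ∀ s, HasSum (Mm s) 1) (hMpsum : ∀ s, HasSum (Mp s) 1)
    (hcomm : ∀ s t, ∑' w, Mm s w * Mp w t = ∑' w, Mp s w * Mm w t)
    (hint : ∀ s t u, (∑' w, Mm s w * Mp w t) * T s t u = Mm s u * Mp u t)
    (L : ℕ) [NeZero L] (t u : ZMod L → E) :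
    HasSum (fun s : ZMod L → E =>
        (∏ i : ZMod L, Mm (s i) (t i) * Mp (t i) (s (i + 1))) *
        (∏ i : ZMod L, T (t i) (t (i + 1)) (u i)))
      (∏ i : ZMod L, Mm (t i) (u i) * Mp (u i) (t (i + 1))) := by
  classical
  set h : ZMod L → E → ℝ := fun i w => Mp (t i) w * Mm w (t (i + 1)) with hh_def
  set b : ZMod L → ℝ := fun i => ∑' w, Mp (t i) w * Mm w (t (i + 1)) with hb_def
  have hnn : ∀ i x, 0 ≤ h i x := fun i x =>
    mul_nonneg (hMp01 _ _).1 (hMm01 _ _).1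
  have hsummable : ∀ i, Summable (h i) := fun i => by
    refine Summable.of_nonneg_of_le (fun x => hnn i x) (fun x => ?_) (hMpsum (t i)).summable
    calc Mp (t i) x * Mm x (t (i + 1)) ≤ Mp (t i) x * 1 :=
          mul_le_mul_of_nonneg_left (hMm01 _ _).2 (hMp01 _ _).1
      _ = Mp (t i) x := mul_one _
  have hhb : ∀ i, HasSum (h i) (b i) := fun i => (hsummable i).hasSum
  have hsum0 : HasSum (fun f : ZMod L → E => ∏ i, h i (f i)) (∏ i, b i) :=
    hasSum_pi_prod h b hnn hhb
  have hsum1 : HasSum (fun s : ZMod L → E => ∏ i, h i (s (i + 1))) (∏ i, b i) := by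
    have : HasSum ((fun f : ZMod L → E => ∏ i, h i (f i)) ∘ (stmt5ShiftEquiv E L))
        (∏ i, b i) := ((stmt5ShiftEquiv E L).hasSum_iff).2 hsum0
    exact this
  have hprod_eq : ∀ s : ZMod L → E,
      (∏ i : ZMod L, Mm (s i) (t i) * Mp (t i) (s (i + 1))) = ∏ i, h i (s (i + 1)) := by
    intro s
    rw [Finset.prod_mul_distrib, Finset.prod_mul_distrib, mul_comm]
    congr 1
    exact (Fintype.prod_equiv (Equiv.addRight (1 : ZMod L))
      (fun i => Mm (s (i + 1)) (t (i + 1))) (fun i => Mm (s i) (t i))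
      (fun i => rfl)).symm
  have hmain : HasSum (fun s : ZMod L → E =>
      (∏ i : ZMod L, Mm (s i) (t i) * Mp (t i) (s (i + 1))) *
      (∏ i : ZMod L, T (t i) (t (i + 1)) (u i)))
      ((∏ i, b i) * ∏ i : ZMod L, T (t i) (t (i + 1)) (u i)) := by
    have := hsum1.mul_right (∏ i : ZMod L, T (t i) (t (i + 1)) (u i))
    simp only [hprod_eq]
    exact this
  have hval : (∏ i, b i) * (∏ i : ZMod L, T (t i) (t (i + 1)) (u i))
      = ∏ i : ZMod L, Mm (t i) (u i) * Mp (u i) (t (i + 1)) := by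
    rw [← Finset.prod_mul_distrib]
    refine Finset.prod_congr rfl fun i _ => ?_
    have hb : b i = ∑' w, Mm (t i) w * Mp w (t (i + 1)) := (hcomm (t i) (t (i + 1))).symm
    rw [hb]
    exact hint (t i) (t (i + 1)) (u i)
  rwa [hval] at hmain
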